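/- arXiv:2512.23420 — 2 statements merged into one kernel-verified Lean document; each statement's English description precedes it below -/
import Mathlib

section
/- Let $x : [0,1] \to \mathbb{R}$ be continuously differentiable, let $a, b, k_1, k_2 \in \mathbb{R}$, and set $\bar k_1 = \max\{0, -a k_1\}$. Assume $\bar k_1 - a < 0$. Then $a k_2 x(1)^2 - a k_1 x(0)^2 - a\int_0^1 x'(\xi)^2 d\xi + b\int_0^1 x(\xi)^2 d\xi \le \left(a k_2 + \tfrac{\bar k_1}{2} + \tfrac{a}{2}\right) x(1)^2 + \left(\tfrac{5}{4}\bar k_1 - \tfrac{a}{4} + b\right) \int_0^1 x(\xi)^2 d\xi$. -/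
open intervalIntegral Set

lemma pointwise_bound (x : ℝ → ℝ) (hx : ContDiff ℝ 1 x) (c : ℝ) (hc : 0 < c)
    (ξ : ℝ) (hξ : ξ ∈ Set.Icc (0:ℝ) 1) :
    x ξ ^ 2 ≤ x 1 ^ 2
      + ∫ t in (0:ℝ)..1, (c * (deriv x t) ^ 2 + (1 / c) * (x t) ^ 2) := by
  have hxc : Continuous x := hx.continuous
  have hdc : Continuous (deriv x) := hx.continuous_deriv le_rfl
  have hder : ∀ t : ℝ, HasDerivAt (fun s => x s ^ 2) (2 * x t * deriv x t) t := by
    intro t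
    have h := ((hx.differentiable one_ne_zero) t).hasDerivAt
    have := h.fun_pow 2
    simpa [mul_comm, mul_assoc, mul_left_comm] using this
  have hcont : Continuous (fun t => 2 * x t * deriv x t) := by continuity
  have hcont2 : Continuous (fun t => c * (deriv x t) ^ 2 + (1 / c) * (x t) ^ 2) := by
    continuity
  have hftc : ∫ t in ξ..1, 2 * x t * deriv x t = x 1 ^ 2 - x ξ ^ 2 := by
    exact integral_eq_sub_of_hasDerivAt (fun t _ => hder t) (hcont.intervalIntegrable ξ 1)
  have hle : ξ ≤ 1 := hξ.2
  have h0 : (0:ℝ) ≤ ξ := hξ.1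
  have hmono : ∫ t in ξ..1, (-(2 * x t * deriv x t))
      ≤ ∫ t in ξ..1, (c * (deriv x t) ^ 2 + (1 / c) * (x t) ^ 2) := by
    apply integral_mono_on hle
      (hcont.neg.intervalIntegrable _ _) (hcont2.intervalIntegrable _ _)
    intro t _
    rw [← sub_nonneg]
    have heq : c * deriv x t ^ 2 + 1 / c * x t ^ 2 - -(2 * x t * deriv x t)
        = (c * deriv x t + x t) ^ 2 / c := by field_simp; ring
    simp only [Pi.neg_apply]; rw [heq]; positivity
  have hsplit : ∫ t in ξ..1, (c * (deriv x t) ^ 2 + (1 / c) * (x t) ^ 2)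
      ≤ ∫ t in (0:ℝ)..1, (c * (deriv x t) ^ 2 + (1 / c) * (x t) ^ 2) := by
    rw [← integral_add_adjacent_intervals (hcont2.intervalIntegrable 0 ξ)
      (hcont2.intervalIntegrable ξ 1)]
    have : 0 ≤ ∫ t in (0:ℝ)..ξ, (c * (deriv x t) ^ 2 + (1 / c) * (x t) ^ 2) := by
      apply integral_nonneg h0
      intro t _
      positivity
    linarith
  have hneg : ∫ t in ξ..1, (-(2 * x t * deriv x t)) = -(x 1 ^ 2 - x ξ ^ 2) := by
    rw [integral_neg, hftc]
  linarith [hmono, hsplit, hneg.symm.le, hneg.le]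

theorem lyapunov_estimate_chain (x : ℝ → ℝ) (hx : ContDiff ℝ 1 x)
    (a b k₁ k₂ : ℝ) (k₁bar : ℝ) (hk₁bar : k₁bar = max 0 (-(a * k₁)))
    (h1 : k₁bar - a < 0) :
    a * k₂ * (x 1) ^ 2 - a * k₁ * (x 0) ^ 2
      - a * (∫ ξ in (0:ℝ)..1, (deriv x ξ) ^ 2)
      + b * (∫ ξ in (0:ℝ)..1, (x ξ) ^ 2)
    ≤ (a * k₂ + k₁bar / 2 + a / 2) * (x 1) ^ 2
      + (5 / 4 * k₁bar - a / 4 + b) * (∫ ξ in (0:ℝ)..1, (x ξ) ^ 2) := by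
  have hxc : Continuous x := hx.continuous
  have hdc : Continuous (deriv x) := hx.continuous_deriv le_rfl
  set I := ∫ ξ in (0:ℝ)..1, (deriv x ξ) ^ 2 with hI
  set J := ∫ ξ in (0:ℝ)..1, (x ξ) ^ 2 with hJ
  have hInn : 0 ≤ I := integral_nonneg (by norm_num) (fun t _ => sq_nonneg _)
  have hJnn : 0 ≤ J := integral_nonneg (by norm_num) (fun t _ => sq_nonneg _)
  -- Agmon with Young (c = 1)
  have hsplit1 : ∫ t in (0:ℝ)..1, ((1:ℝ) * (deriv x t) ^ 2 + (1/1) * (x t) ^ 2) = I + J := by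
    rw [integral_add ((by continuity : Continuous fun t => (1:ℝ) * (deriv x t) ^ 2).intervalIntegrable 0 1)
      ((by continuity : Continuous fun t => (1/1 : ℝ) * (x t) ^ 2).intervalIntegrable 0 1)]
    simp [hI, hJ]
  have hA : x 0 ^ 2 ≤ x 1 ^ 2 + (I + J) := by
    have := pointwise_bound x hx 1 one_pos 0 (by norm_num)
    rwa [hsplit1] at this
  -- Poincaré: J ≤ 2 x1² + 4 I, via pointwise bound with c = 2 integrated
  have hsplit2 : ∫ t in (0:ℝ)..1, ((2:ℝ) * (deriv x t) ^ 2 + (1/2) * (x t) ^ 2)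
      = 2 * I + (1/2) * J := by
    rw [integral_add ((by continuity : Continuous fun t => (2:ℝ) * (deriv x t) ^ 2).intervalIntegrable 0 1)
      ((by continuity : Continuous fun t => (1/2 : ℝ) * (x t) ^ 2).intervalIntegrable 0 1)]
    rw [integral_const_mul, integral_const_mul]
  have hP : J ≤ 2 * x 1 ^ 2 + 4 * I := by
    have hpt : ∀ t ∈ Set.Icc (0:ℝ) 1,
        x t ^ 2 ≤ x 1 ^ 2 + (2 * I + (1/2) * J) := by
      intro t ht
      have := pointwise_bound x hx 2 two_pos t ht
      rwa [hsplit2] at this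
    have hint : J ≤ ∫ _ in (0:ℝ)..1, (x 1 ^ 2 + (2 * I + (1/2) * J)) := by
      apply integral_mono_on (by norm_num)
        ((by continuity : Continuous fun t => (x t) ^ 2).intervalIntegrable 0 1)
        (intervalIntegrable_const)
      exact hpt
    rw [integral_const] at hint
    simp at hint
    linarith
  have hk : -(a * k₁) ≤ k₁bar := hk₁bar ▸ le_max_right _ _
  have hknn : 0 ≤ k₁bar := hk₁bar ▸ le_max_left _ _
  have hx0 : 0 ≤ x 0 ^ 2 := sq_nonneg _
  have hx1 : 0 ≤ x 1 ^ 2 := sq_nonneg _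
  nlinarith [mul_le_mul_of_nonneg_right hk hx0,
    mul_le_mul_of_nonneg_left hA hknn,
    mul_le_mul_of_nonneg_left hP (by linarith : (0:ℝ) ≤ a - k₁bar)]
end

section
/- Let $a, b, k_1, k_2 \in \mathbb{R}$ with $\bar k_1 = \max\{0, -a k_1\}$ satisfying $\bar k_1 - a < 0$, $5\bar k_1 - a + 4b < 0$, and $2 a k_2 + \bar k_1 + a < 0$. Suppose $x : [0,1] \times [0,\infty) \to \mathbb{R}$ is a classical solution of $x_t = a x_{\xi\xi} + b x$ with $x_\xi(0,t) = k_1 x(0,t)$ and $x_\xi(1,t) = k_2 x(1,t)$, with $x(\cdot, t)$ twice continuously differentiable in $\xi$ and $V(t) = \tfrac12 \int_0^1 x(\xi,t)^2\,d\xi$ differentiable in $t$ with $V'(t) = \int_0^1 x\, x_t\,d\xi$. Then there exists $\mu > 0$ such that $V'(t) \le -\mu\, V(t)$ for all $t \ge 0$, and hence $V(t) \le V(0) e^{-\mu t}$, so $\int_0^1 x(\xi,t)^2 d\xi \to 0$ as $t \to \infty$. -/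
open intervalIntegral MeasureTheory

private lemma pde_key_lemma (a b k₁ k₂ k₁bar : ℝ)
    (hk0 : 0 ≤ k₁bar) (hk1 : -(a * k₁) ≤ k₁bar)
    (h1 : k₁bar - a < 0) (h3 : 2 * a * k₂ + k₁bar + a < 0)
    (f : ℝ → ℝ) (hf : ContDiff ℝ 2 f)
    (hb0' : deriv f 0 = k₁ * f 0) (hb1' : deriv f 1 = k₂ * f 1) :
    (∫ ξ in (0:ℝ)..1, f ξ * (a * deriv (deriv f) ξ + b * f ξ))
      ≤ -((a - 5 * k₁bar - 4 * b) / 2) * ((1/2) * ∫ ξ in (0:ℝ)..1, f ξ ^ 2) := by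
  have ha : 0 < a := by linarith
  have hf2 : ContDiff ℝ ((1:ℕ∞)+1) f := by exact_mod_cast hf
  have hfd : Differentiable ℝ f := (contDiff_succ_iff_deriv.mp hf2).1
  have hfc : Continuous f := hfd.continuous
  have hf'1 : ContDiff ℝ 1 (deriv f) := by
    exact_mod_cast (contDiff_succ_iff_deriv.mp hf2).2.2
  have hf'd : Differentiable ℝ (deriv f) := hf'1.differentiable one_ne_zero
  have hf'c : Continuous (deriv f) := hf'd.continuous
  have hf''c : Continuous (deriv (deriv f)) := by
    have hf'11 : ContDiff ℝ ((0:ℕ∞)+1) (deriv f) := by exact_mod_cast hf'1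
    exact ((contDiff_succ_iff_deriv.mp hf'11).2.2).continuous
  have hiA : IntervalIntegrable (fun ξ => f ξ ^ 2) volume 0 1 :=
    (hfc.pow 2).intervalIntegrable 0 1
  have hiB : IntervalIntegrable (fun ξ => (deriv f ξ) ^ 2) volume 0 1 :=
    (hf'c.pow 2).intervalIntegrable 0 1
  have hiP : IntervalIntegrable (fun ξ => f ξ * deriv f ξ) volume 0 1 :=
    (hfc.mul hf'c).intervalIntegrable 0 1
  have hiQ : IntervalIntegrable (fun ξ => f ξ * deriv (deriv f) ξ) volume 0 1 :=
    (hfc.mul hf''c).intervalIntegrable 0 1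
  set A : ℝ := ∫ ξ in (0:ℝ)..1, f ξ ^ 2 with hA
  set B : ℝ := ∫ ξ in (0:ℝ)..1, (deriv f ξ) ^ 2 with hB
  set P : ℝ := ∫ ξ in (0:ℝ)..1, f ξ * deriv f ξ with hP
  -- split the integral
  have hsplit : (∫ ξ in (0:ℝ)..1, f ξ * (a * deriv (deriv f) ξ + b * f ξ))
      = a * (∫ ξ in (0:ℝ)..1, f ξ * deriv (deriv f) ξ) + b * A := by
    have hcg : (∫ ξ in (0:ℝ)..1, f ξ * (a * deriv (deriv f) ξ + b * f ξ))
        = ∫ ξ in (0:ℝ)..1, (a * (f ξ * deriv (deriv f) ξ) + b * f ξ ^ 2) := by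
      apply intervalIntegral.integral_congr
      intro ξ _; ring
    rw [hcg, intervalIntegral.integral_add (hiQ.const_mul a) (hiA.const_mul b),
      intervalIntegral.integral_const_mul, intervalIntegral.integral_const_mul]
  -- integration by parts
  have hparts : (∫ ξ in (0:ℝ)..1, f ξ * deriv (deriv f) ξ)
      = f 1 * deriv f 1 - f 0 * deriv f 0 - B := by
    rw [intervalIntegral.integral_mul_deriv_eq_deriv_mul
      (u := f) (v := deriv f) (u' := deriv f) (v' := deriv (deriv f))
      (fun ξ _ => (hfd ξ).hasDerivAt) (fun ξ _ => (hf'd ξ).hasDerivAt)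
      (hf'c.intervalIntegrable 0 1) (hf''c.intervalIntegrable 0 1)]
    congr 1
    rw [hB]
    apply intervalIntegral.integral_congr
    intro ξ _; ring
  -- FTC for f^2 on subintervals
  have hftc : ∀ c ∈ Set.Icc (0:ℝ) 1,
      (∫ z in c..1, 2 * (f z * deriv f z)) = f 1 ^ 2 - f c ^ 2 := by
    intro c _
    apply intervalIntegral.integral_eq_sub_of_hasDerivAt (f := fun z => f z ^ 2)
    · intro z _
      have h : HasDerivAt (fun z => f z ^ 2) _ z := ((hfd z).hasDerivAt).pow 2
      refine h.congr_deriv ?_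
      push_cast
      ring
    · exact ((continuous_const.mul (hfc.mul hf'c))).intervalIntegrable c 1
  have htrace : f 0 ^ 2 = f 1 ^ 2 - 2 * P := by
    have h0 := hftc 0 (by norm_num)
    have h2P : (∫ z in (0:ℝ)..1, 2 * (f z * deriv f z)) = 2 * P := by
      rw [hP, intervalIntegral.integral_const_mul]
    linarith
  -- positivity: A + 2P + B ≥ 0
  have hsq : 0 ≤ A + 2 * P + B := by
    have h0 : 0 ≤ ∫ ξ in (0:ℝ)..1, (f ξ + deriv f ξ) ^ 2 :=
      intervalIntegral.integral_nonneg (by norm_num) (fun ξ _ => sq_nonneg _)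
    have hexp : (∫ ξ in (0:ℝ)..1, (f ξ + deriv f ξ) ^ 2) = A + 2 * P + B := by
      have hcg : (∫ ξ in (0:ℝ)..1, (f ξ + deriv f ξ) ^ 2)
          = ∫ ξ in (0:ℝ)..1, (f ξ ^ 2 + 2 * (f ξ * deriv f ξ) + (deriv f ξ) ^ 2) := by
        apply intervalIntegral.integral_congr
        intro ξ _; ring
      rw [hcg, intervalIntegral.integral_add (hiA.add (hiP.const_mul 2)) hiB,
        intervalIntegral.integral_add hiA (hiP.const_mul 2),
        intervalIntegral.integral_const_mul]
    linarith
  -- Poincaré-type inequality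
  have hpoin : A / 2 ≤ f 1 ^ 2 + 2 * B := by
    have hptw : ∀ ξ ∈ Set.Icc (0:ℝ) 1,
        f ξ ^ 2 ≤ f 1 ^ 2 + ∫ z in (0:ℝ)..1, ((1/2) * f z ^ 2 + 2 * (deriv f z) ^ 2) := by
      intro ξ hξ
      have hftcξ := hftc ξ hξ
      have hint1 : (∫ z in ξ..1, -(2 * (f z * deriv f z)))
          ≤ ∫ z in ξ..1, ((1/2) * f z ^ 2 + 2 * (deriv f z) ^ 2) := by
        apply intervalIntegral.integral_mono_on hξ.2
        · exact ((continuous_const.mul (hfc.mul hf'c)).neg).intervalIntegrable ξ 1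
        · exact ((continuous_const.mul (hfc.pow 2)).add
            (continuous_const.mul (hf'c.pow 2))).intervalIntegrable ξ 1
        · intro z _
          nlinarith [sq_nonneg (f z + 2 * deriv f z)]
      have hint1' : -(∫ z in ξ..1, 2 * (f z * deriv f z))
          ≤ ∫ z in ξ..1, ((1/2) * f z ^ 2 + 2 * (deriv f z) ^ 2) := by
        rw [← intervalIntegral.integral_neg]; exact hint1
      have hint2 : (∫ z in ξ..1, ((1/2) * f z ^ 2 + 2 * (deriv f z) ^ 2))
          ≤ ∫ z in (0:ℝ)..1, ((1/2) * f z ^ 2 + 2 * (deriv f z) ^ 2) := by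
        apply intervalIntegral.integral_mono_interval hξ.1 hξ.2 le_rfl
        · exact ae_of_all _ (fun z => by positivity)
        · exact ((continuous_const.mul (hfc.pow 2)).add
            (continuous_const.mul (hf'c.pow 2))).intervalIntegrable 0 1
      linarith
    have hmono : A ≤ ∫ ξ in (0:ℝ)..1,
        (f 1 ^ 2 + ∫ z in (0:ℝ)..1, ((1/2) * f z ^ 2 + 2 * (deriv f z) ^ 2)) := by
      rw [hA]
      exact intervalIntegral.integral_mono_on (by norm_num) hiA
        intervalIntegrable_const hptw
    have hconst : (∫ ξ in (0:ℝ)..1,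
        (f 1 ^ 2 + ∫ z in (0:ℝ)..1, ((1/2) * f z ^ 2 + 2 * (deriv f z) ^ 2)))
        = f 1 ^ 2 + ∫ z in (0:ℝ)..1, ((1/2) * f z ^ 2 + 2 * (deriv f z) ^ 2) := by
      rw [intervalIntegral.integral_const]
      simp
    have hval : (∫ z in (0:ℝ)..1, ((1/2) * f z ^ 2 + 2 * (deriv f z) ^ 2))
        = (1/2) * A + 2 * B := by
      rw [intervalIntegral.integral_add (hiA.const_mul _) (hiB.const_mul _),
        intervalIntegral.integral_const_mul, intervalIntegral.integral_const_mul]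
    rw [hconst, hval] at hmono
    linarith
  -- assemble
  rw [hsplit, hparts, hb0', hb1']
  have P1 : 0 ≤ k₁bar * f 0 ^ 2 + a * k₁ * f 0 ^ 2 := by nlinarith [sq_nonneg (f 0)]
  have P2 : 0 ≤ k₁bar * A + 2 * (k₁bar * P) + k₁bar * B := by nlinarith [hsq]
  have P3 : 0 ≤ a * f 1 ^ 2 + 2 * (a * B) - a * A / 2
      - k₁bar * f 1 ^ 2 - 2 * (k₁bar * B) + k₁bar * A / 2 := by nlinarith [hpoin]
  have P4 : 2 * (a * k₂) * f 1 ^ 2 + a * f 1 ^ 2 + k₁bar * f 1 ^ 2 ≤ 0 := by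
    nlinarith [sq_nonneg (f 1)]
  have htr2 : k₁bar * f 0 ^ 2 = k₁bar * f 1 ^ 2 - 2 * (k₁bar * P) := by
    rw [htrace]; ring
  linarith [P1, P2, P3, P4, htr2]

theorem pde_asymptotic_stability (a b k₁ k₂ : ℝ) (k₁bar : ℝ)
    (hk₁bar : k₁bar = max 0 (-(a * k₁)))
    (h1 : k₁bar - a < 0) (h2 : 5 * k₁bar - a + 4 * b < 0)
    (h3 : 2 * a * k₂ + k₁bar + a < 0)
    (x : ℝ → ℝ → ℝ)
    (hsmooth : ∀ t ≥ (0:ℝ), ContDiff ℝ 2 (fun ξ => x ξ t))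
    (hpde : ∀ ξ ∈ Set.Icc (0:ℝ) 1, ∀ t ≥ (0:ℝ),
      HasDerivAt (fun s => x ξ s)
        (a * deriv (deriv (fun z => x z t)) ξ + b * x ξ t) t)
    (hb0 : ∀ t ≥ (0:ℝ), deriv (fun z => x z t) 0 = k₁ * x 0 t)
    (hb1 : ∀ t ≥ (0:ℝ), deriv (fun z => x z t) 1 = k₂ * x 1 t)
    (V : ℝ → ℝ) (hV : ∀ t, V t = (1 / 2) * ∫ ξ in (0:ℝ)..1, (x ξ t) ^ 2)
    (hV' : ∀ t ≥ (0:ℝ),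
      HasDerivAt V (∫ ξ in (0:ℝ)..1, x ξ t * deriv (fun s => x ξ s) t) t) :
    ∃ μ > (0:ℝ),
      (∀ t ≥ (0:ℝ), deriv V t ≤ -μ * V t) ∧
      (∀ t ≥ (0:ℝ), V t ≤ V 0 * Real.exp (-μ * t)) ∧
      Filter.Tendsto (fun t => ∫ ξ in (0:ℝ)..1, (x ξ t) ^ 2)
        Filter.atTop (nhds 0) := by
  have hk0 : 0 ≤ k₁bar := hk₁bar ▸ le_max_left _ _
  have hk1 : -(a * k₁) ≤ k₁bar := hk₁bar ▸ le_max_right _ _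
  have ha : 0 < a := by linarith
  set μ : ℝ := (a - 5 * k₁bar - 4 * b) / 2 with hμdef
  have hμ : 0 < μ := by rw [hμdef]; linarith
  have hVnn : ∀ t, 0 ≤ V t := by
    intro t
    rw [hV t]
    have h0 : 0 ≤ ∫ ξ in (0:ℝ)..1, (x ξ t) ^ 2 :=
      intervalIntegral.integral_nonneg (by norm_num) (fun ξ _ => sq_nonneg _)
    linarith
  have key : ∀ t ≥ (0:ℝ), deriv V t ≤ -μ * V t := by
    intro t ht
    have hderiv : deriv V t = ∫ ξ in (0:ℝ)..1, x ξ t * deriv (fun s => x ξ s) t :=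
      (hV' t ht).deriv
    have hcong : (∫ ξ in (0:ℝ)..1, x ξ t * deriv (fun s => x ξ s) t)
        = ∫ ξ in (0:ℝ)..1, (fun z => x z t) ξ
            * (a * deriv (deriv (fun z => x z t)) ξ + b * (fun z => x z t) ξ) := by
      apply intervalIntegral.integral_congr
      intro ξ hξ
      rw [Set.uIcc_of_le (by norm_num : (0:ℝ) ≤ 1)] at hξ
      simp only []
      rw [(hpde ξ hξ t ht).deriv]
    have hlem := pde_key_lemma a b k₁ k₂ k₁bar hk0 hk1 h1 h3
      (fun z => x z t) (hsmooth t ht) (hb0 t ht) (hb1 t ht)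
    rw [hderiv, hcong, hV t]
    exact hlem
  have gron : ∀ t ≥ (0:ℝ), V t ≤ V 0 * Real.exp (-μ * t) := by
    intro t ht
    set g : ℝ → ℝ := fun s => V s * Real.exp (μ * s) with hg
    have hgd : ∀ s ∈ Set.Ici (0:ℝ), HasDerivAt g
        ((∫ ξ in (0:ℝ)..1, x ξ s * deriv (fun τ => x ξ τ) s) * Real.exp (μ * s)
          + V s * (Real.exp (μ * s) * μ)) s := by
      intro s hs
      have h := (hV' s hs).mul (((hasDerivAt_id s).const_mul μ).exp)
      simp only [id, mul_one] at h
      exact h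
    have hanti : AntitoneOn g (Set.Ici 0) := by
      apply antitoneOn_of_deriv_nonpos (convex_Ici 0)
      · intro s hs
        exact (hgd s hs).continuousAt.continuousWithinAt
      · intro s hs
        rw [interior_Ici] at hs
        exact ((hgd s (Set.mem_Ici.mpr (le_of_lt hs))).differentiableAt).differentiableWithinAt
      · intro s hs
        rw [interior_Ici] at hs
        have hs' : (0:ℝ) ≤ s := le_of_lt hs
        rw [(hgd s hs').deriv]
        have hkey := key s hs'
        have hdv : deriv V s = ∫ ξ in (0:ℝ)..1, x ξ s * deriv (fun τ => x ξ τ) s :=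
          (hV' s hs').deriv
        rw [← hdv]
        have hexp : (0:ℝ) < Real.exp (μ * s) := Real.exp_pos _
        nlinarith [mul_le_mul_of_nonneg_right hkey hexp.le]
    have h0le : g t ≤ g 0 := hanti Set.self_mem_Ici ht ht
    have h0le' : V t * Real.exp (μ * t) ≤ V 0 := by
      simpa [hg] using h0le
    have hmul : V t * Real.exp (μ * t) * Real.exp (-μ * t)
        ≤ V 0 * Real.exp (-μ * t) :=
      mul_le_mul_of_nonneg_right h0le' (Real.exp_nonneg _)
    calc V t = V t * Real.exp (μ * t) * Real.exp (-μ * t) := by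
          rw [mul_assoc, ← Real.exp_add, show μ * t + -μ * t = 0 by ring,
            Real.exp_zero, mul_one]
      _ ≤ V 0 * Real.exp (-μ * t) := hmul
  refine ⟨μ, hμ, key, gron, ?_⟩
  have htend : Filter.Tendsto (fun t => 2 * (V 0 * Real.exp (-μ * t)))
      Filter.atTop (nhds 0) := by
    have hexp : Filter.Tendsto (fun t : ℝ => Real.exp (-μ * t)) Filter.atTop (nhds 0) := by
      have hcomp : Filter.Tendsto (fun t : ℝ => μ * t) Filter.atTop Filter.atTop :=
        Filter.Tendsto.const_mul_atTop hμ Filter.tendsto_id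
      have h := Real.tendsto_exp_neg_atTop_nhds_zero.comp hcomp
      apply h.congr
      intro t
      simp [Function.comp, neg_mul]
    have h2 := hexp.const_mul (2 * V 0)
    simp only [mul_zero] at h2
    apply h2.congr
    intro t; ring
  apply squeeze_zero' ?_ ?_ htend
  · filter_upwards [Filter.eventually_ge_atTop (0:ℝ)] with t ht
    exact intervalIntegral.integral_nonneg (by norm_num) (fun ξ _ => sq_nonneg _)
  · filter_upwards [Filter.eventually_ge_atTop (0:ℝ)] with t ht
    have := gron t ht
    rw [hV t] at this
    linarith
end
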